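/- Let G = (V, E) be a finite simple claw-free graph, let C₀ be an even hole of G, and let t be a vertex in the closed neighborhood N[C₀]. Then t lies in the closed neighborhood N[C] for every even hole C in the deformation closure ⟨C₀⟩; equivalently, N[C] = N[C₀] for all C ∈ ⟨C₀⟩. (Lemma 6.) -/
import Mathlib


open scoped Classical

universe u

/-- `G` is claw-free: no vertex has three pairwise distinct, pairwise non-adjacent neighbors. -/
def ClawFree {V : Type u} (G : SimpleGraph V) : Prop :=
  ¬ ∃ c x y z : V, x ≠ y ∧ x ≠ z ∧ y ≠ z ∧
    G.Adj c x ∧ G.Adj c y ∧ G.Adj c z ∧ ¬ G.Adj x y ∧ ¬ G.Adj x z ∧ ¬ G.Adj y z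

/-- `C` induces a cycle of length at least 4 in `G`: it has at least four vertices, the
induced subgraph is connected, and every vertex of `C` has exactly two neighbors in `C`. -/
def IsHole {V : Type u} [DecidableEq V] (G : SimpleGraph V) (C : Finset V) : Prop :=
  4 ≤ C.card ∧ (G.induce (C : Set V)).Connected ∧
    ∀ v ∈ C, (C.filter fun u => G.Adj v u).card = 2

/-- `C` is an even hole of `G`: it induces a cycle of even length at least 4. -/
def IsEvenHole {V : Type u} [DecidableEq V] (G : SimpleGraph V) (C : Finset V) : Prop :=
  IsHole G C ∧ Even C.card

/-- `L'` is the single-vertex deformation of `L` by a vertex `j ∉ L` whose neighborhood in `L`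
consists of a vertex `k` together with the two neighbors of `k` within `L`; then
`L' = (L \ {k}) ∪ {j}`. -/
def SingleVertexDeform {V : Type u} [DecidableEq V] (G : SimpleGraph V)
    (L L' : Finset V) : Prop :=
  ∃ j k, j ∉ L ∧ k ∈ L ∧
    (L.filter fun u => G.Adj j u) = insert k (L.filter fun u => G.Adj k u) ∧
    (L.filter fun u => G.Adj k u).card = 2 ∧
    L' = insert j (L.erase k)
section Aux

variable {V : Type u} [DecidableEq V] {G : SimpleGraph V}

/-- In a hole, the two neighbors of any vertex are non-adjacent. -/
lemma hole_nbrs_nonadj {L : Finset V} (hL : 4 ≤ L.card)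
    (hconn : (G.induce (L : Set V)).Connected)
    (hdeg : ∀ v ∈ L, (L.filter fun u => G.Adj v u).card = 2)
    {k u1 u2 : V} (hk : k ∈ L)
    (hA : (L.filter fun u => G.Adj k u) = {u1, u2}) : ¬ G.Adj u1 u2 := by
  intro hadj
  have hu1 : u1 ∈ L.filter fun u => G.Adj k u := by rw [hA]; simp
  have hu2 : u2 ∈ L.filter fun u => G.Adj k u := by rw [hA]; simp
  rw [Finset.mem_filter] at hu1 hu2
  have hku1 : G.Adj k u1 := hu1.2
  have hku2 : G.Adj k u2 := hu2.2
  have hne12 : u1 ≠ u2 := by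
    intro h; subst h
    have := hdeg k hk
    rw [hA] at this; simp at this
  set S : Finset V := {k, u1, u2} with hS
  have hSL : S ⊆ L := by
    intro x hx
    simp only [hS, Finset.mem_insert, Finset.mem_singleton] at hx
    rcases hx with rfl | rfl | rfl
    · exact hk
    · exact hu1.1
    · exact hu2.1
  -- neighbors of u1 in L are exactly {k, u2}
  have hfu1 : (L.filter fun u => G.Adj u1 u) = {k, u2} := by
    refine (Finset.eq_of_subset_of_card_le ?_ ?_).symm
    · intro x hx
      simp only [Finset.mem_insert, Finset.mem_singleton] at hx
      rcases hx with rfl | rfl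
      · exact Finset.mem_filter.2 ⟨hk, hku1.symm⟩
      · exact Finset.mem_filter.2 ⟨hu2.1, hadj⟩
    · rw [hdeg u1 hu1.1, Finset.card_insert_of_notMem (by simpa using hku2.ne),
        Finset.card_singleton]
  have hfu2 : (L.filter fun u => G.Adj u2 u) = {k, u1} := by
    refine (Finset.eq_of_subset_of_card_le ?_ ?_).symm
    · intro x hx
      simp only [Finset.mem_insert, Finset.mem_singleton] at hx
      rcases hx with rfl | rfl
      · exact Finset.mem_filter.2 ⟨hk, hku2.symm⟩
      · exact Finset.mem_filter.2 ⟨hu1.1, hadj.symm⟩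
    · rw [hdeg u2 hu2.1, Finset.card_insert_of_notMem (by simpa using hku1.ne),
        Finset.card_singleton]
  have closure : ∀ v ∈ S, ∀ x ∈ L, G.Adj v x → x ∈ S := by
    intro v hv x hxL hvx
    simp only [hS, Finset.mem_insert, Finset.mem_singleton] at hv ⊢
    rcases hv with rfl | rfl | rfl
    · have : x ∈ L.filter fun u => G.Adj v u := Finset.mem_filter.2 ⟨hxL, hvx⟩
      rw [hA] at this; simp only [Finset.mem_insert, Finset.mem_singleton] at this
      tauto
    · have : x ∈ L.filter fun u => G.Adj v u := Finset.mem_filter.2 ⟨hxL, hvx⟩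
      rw [hfu1] at this; simp only [Finset.mem_insert, Finset.mem_singleton] at this
      tauto
    · have : x ∈ L.filter fun u => G.Adj v u := Finset.mem_filter.2 ⟨hxL, hvx⟩
      rw [hfu2] at this; simp only [Finset.mem_insert, Finset.mem_singleton] at this
      tauto
  have hScard : S.card ≤ 3 := by
    calc S.card ≤ ({u1, u2} : Finset V).card + 1 := Finset.card_insert_le _ _
    _ ≤ 3 := by
        have := Finset.card_insert_le u1 ({u2} : Finset V)
        simp at this ⊢; omega
  obtain ⟨w, hwL, hwS⟩ : ∃ w ∈ L, w ∉ S := by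
    by_contra h
    push_neg at h
    have := Finset.card_le_card h
    omega
  have key : ∀ (a b : ((L : Set V))), (G.induce (L : Set V)).Walk a b →
      a.1 ∈ S → b.1 ∈ S := by
    intro a b p
    induction p with
    | nil => exact id
    | @cons a c b h p ih =>
      intro ha
      exact ih (closure a.1 ha c.1 c.2 h)
  have hreach := hconn.preconnected ⟨k, hk⟩ ⟨w, hwL⟩
  obtain ⟨p⟩ := hreach
  exact hwS (key _ _ p (by simp [hS]))

/-- Single-vertex deformation preserves even holes. -/
lemma deform_evenHole {L L' : Finset V} (hL : IsEvenHole G L)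
    (hd : SingleVertexDeform G L L') : IsEvenHole G L' := by
  obtain ⟨⟨hcard, hconn, hdeg⟩, heven⟩ := hL
  obtain ⟨j, k, hjL, hkL, hJ, h2, hL'⟩ := hd
  obtain ⟨u1, u2, hne12, hA⟩ := Finset.card_eq_two.mp h2
  have hu1 : u1 ∈ L.filter fun u => G.Adj k u := by rw [hA]; simp
  have hu2 : u2 ∈ L.filter fun u => G.Adj k u := by rw [hA]; simp
  rw [Finset.mem_filter] at hu1 hu2
  have hku1 : G.Adj k u1 := hu1.2
  have hku2 : G.Adj k u2 := hu2.2
  have hjk : G.Adj j k := by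
    have : k ∈ L.filter fun u => G.Adj j u := by rw [hJ]; simp
    exact (Finset.mem_filter.mp this).2
  have hju1 : G.Adj j u1 := by
    have : u1 ∈ L.filter fun u => G.Adj j u := by rw [hJ, hA]; simp
    exact (Finset.mem_filter.mp this).2
  have hju2 : G.Adj j u2 := by
    have : u2 ∈ L.filter fun u => G.Adj j u := by rw [hJ, hA]; simp
    exact (Finset.mem_filter.mp this).2
  have hjE : j ∉ L.erase k := fun h => hjL (Finset.mem_of_mem_erase h)
  have hcard' : L'.card = L.card := by
    rw [hL', Finset.card_insert_of_notMem hjE, Finset.card_erase_of_mem hkL]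
    omega
  -- characterization of adjacency to j within L
  have hadj_j : ∀ v ∈ L, (G.Adj j v ↔ (v = k ∨ v = u1 ∨ v = u2)) := by
    intro v hvL
    constructor
    · intro h
      have : v ∈ L.filter fun u => G.Adj j u := Finset.mem_filter.2 ⟨hvL, h⟩
      rw [hJ, hA] at this
      simpa using this
    · rintro (rfl | rfl | rfl) <;> assumption
  have hadj_k : ∀ v ∈ L, (G.Adj k v ↔ (v = u1 ∨ v = u2)) := by
    intro v hvL
    constructor
    · intro h
      have : v ∈ L.filter fun u => G.Adj k u := Finset.mem_filter.2 ⟨hvL, h⟩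
      rw [hA] at this; simpa using this
    · rintro (rfl | rfl) <;> assumption
  refine ⟨⟨by omega, ?_, ?_⟩, by rwa [hcard']⟩
  · -- connectedness
    have hmem_j : j ∈ (L' : Set V) := by rw [hL']; simp
    have hmem_other : ∀ x : V, x ∈ L → x ≠ k → x ∈ (L' : Set V) := by
      intro x hx hxk
      rw [hL']
      simp only [Finset.coe_insert, Set.mem_insert_iff, Finset.coe_erase,
        Set.mem_diff, Finset.mem_coe]
      exact Or.inr ⟨hx, by simpa using hxk⟩
    let ff : ↥(L : Set V) → ↥(L' : Set V) := fun a =>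
      if h : a.1 = k then ⟨j, hmem_j⟩ else ⟨a.1, hmem_other a.1 a.2 h⟩
    have hff_k : ∀ (h : k ∈ (L : Set V)), ff ⟨k, h⟩ = ⟨j, hmem_j⟩ := fun h => dif_pos rfl
    have hff_o : ∀ x (hx : x ∈ (L : Set V)) (hxk : x ≠ k),
        ff ⟨x, hx⟩ = ⟨x, hmem_other x hx hxk⟩ := fun x hx hxk => dif_neg hxk
    let f : (G.induce (L : Set V)) →g (G.induce (L' : Set V)) :=
      { toFun := ff
        map_rel' := by
          rintro ⟨a, haL⟩ ⟨b, hbL⟩ hab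
          have hab' : G.Adj a b := hab
          by_cases haK : a = k <;> by_cases hbK : b = k
          · exfalso; exact G.irrefl (haK ▸ hbK ▸ hab')
          · subst haK
            rw [hff_k haL, hff_o b hbL hbK]
            show G.Adj j b
            rcases (hadj_k b hbL).1 hab' with rfl | rfl <;> assumption
          · subst hbK
            rw [hff_k hbL, hff_o a haL haK]
            show G.Adj a j
            rcases (hadj_k a haL).1 hab'.symm with rfl | rfl
            · exact hju1.symm
            · exact hju2.symm
          · rw [hff_o a haL haK, hff_o b hbL hbK]
            exact hab' }
    have hsurj : Function.Surjective f := by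
      rintro ⟨x, hx⟩
      have hx' := hx
      rw [hL'] at hx'
      simp only [Finset.coe_insert, Set.mem_insert_iff, Finset.coe_erase,
        Set.mem_diff, Finset.mem_coe, Set.mem_singleton_iff] at hx'
      rcases hx' with rfl | ⟨hxL, hxk⟩
      · exact ⟨⟨k, hkL⟩, hff_k _⟩
      · exact ⟨⟨x, hxL⟩, hff_o x hxL hxk⟩
    exact hconn.map f hsurj
  · -- degree condition
    intro v hv
    rw [hL'] at hv
    rw [hL']
    rcases Finset.mem_insert.mp hv with rfl | hvE
    · -- v = j
      rw [Finset.filter_insert, if_neg (G.irrefl), Finset.filter_erase]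
      have : (L.filter fun u => G.Adj v u).erase k = {u1, u2} := by
        rw [hJ, hA, Finset.erase_insert]
        simp only [Finset.mem_insert, Finset.mem_singleton]
        push_neg
        exact ⟨hku1.ne, hku2.ne⟩
      rw [this]
      rw [Finset.card_insert_of_notMem (by simpa using hne12), Finset.card_singleton]
    · have hvL : v ∈ L := Finset.mem_of_mem_erase hvE
      have hvk : v ≠ k := Finset.ne_of_mem_erase hvE
      rw [Finset.filter_insert, Finset.filter_erase]
      by_cases hvA : v = u1 ∨ v = u2
      · -- v is a neighbor of k
        have hvj : G.Adj v j := ((hadj_j v hvL).2 (Or.inr hvA)).symm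
        rw [if_pos hvj]
        have hkmem : k ∈ L.filter fun u => G.Adj v u := by
          refine Finset.mem_filter.2 ⟨hkL, ?_⟩
          rcases hvA with rfl | rfl
          · exact hku1.symm
          · exact hku2.symm
        have hjmem : j ∉ (L.filter fun u => G.Adj v u).erase k := by
          intro h
          exact hjL (Finset.mem_filter.mp (Finset.mem_of_mem_erase h)).1
        rw [Finset.card_insert_of_notMem hjmem,
          Finset.card_erase_of_mem hkmem, hdeg v hvL]
      · push_neg at hvA
        have hvj : ¬ G.Adj v j := by
          intro h
          rcases (hadj_j v hvL).1 h.symm with rfl | rfl | rfl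
          · exact hvk rfl
          · exact hvA.1 rfl
          · exact hvA.2 rfl
        rw [if_neg hvj]
        have hkmem : k ∉ L.filter fun u => G.Adj v u := by
          intro h
          have := (Finset.mem_filter.mp h).2
          rcases (hadj_k v hvL).1 this.symm with rfl | rfl
          · exact hvA.1 rfl
          · exact hvA.2 rfl
        rw [Finset.erase_eq_of_notMem hkmem, hdeg v hvL]

/-- Single-vertex deformation preserves membership in the closed neighborhood. -/
lemma deform_closedNbhd (hcf : ClawFree G) {L L' : Finset V} (hL : IsEvenHole G L)
    (hd : SingleVertexDeform G L L') {t : V}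
    (ht : t ∈ L ∨ ∃ u ∈ L, G.Adj u t) : t ∈ L' ∨ ∃ u ∈ L', G.Adj u t := by
  obtain ⟨⟨hcard, hconn, hdeg⟩, _⟩ := hL
  obtain ⟨j, k, hjL, hkL, hJ, h2, hL'⟩ := hd
  obtain ⟨u1, u2, hne12, hA⟩ := Finset.card_eq_two.mp h2
  have hu1 : u1 ∈ L.filter fun u => G.Adj k u := by rw [hA]; simp
  have hu2 : u2 ∈ L.filter fun u => G.Adj k u := by rw [hA]; simp
  rw [Finset.mem_filter] at hu1 hu2
  have hku1 : G.Adj k u1 := hu1.2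
  have hku2 : G.Adj k u2 := hu2.2
  have hjk : G.Adj j k := by
    have : k ∈ L.filter fun u => G.Adj j u := by rw [hJ]; simp
    exact (Finset.mem_filter.mp this).2
  have hjmem : j ∈ L' := by rw [hL']; simp
  have hmem_other : ∀ x, x ∈ L → x ≠ k → x ∈ L' := by
    intro x hx hxk
    rw [hL']
    exact Finset.mem_insert_of_mem (Finset.mem_erase.2 ⟨hxk, hx⟩)
  rcases ht with htL | ⟨u, huL, hut⟩
  · by_cases htk : t = k
    · subst htk
      exact Or.inr ⟨j, hjmem, hjk⟩
    · exact Or.inl (hmem_other t htL htk)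
  · by_cases huk : u = k
    · rw [huk] at hut
      -- t is adjacent to k; find a neighbor of t in L'
      by_cases htj : t = j
      · exact Or.inl (htj ▸ hjmem)
      by_cases htL : t ∈ L
      · by_cases htk : t = k
        · subst htk; exact Or.inr ⟨j, hjmem, hjk⟩
        · exact Or.inl (hmem_other t htL htk)
      by_cases h1 : G.Adj u1 t
      · exact Or.inr ⟨u1, hmem_other u1 hu1.1 hku1.ne', h1⟩
      by_cases h2' : G.Adj u2 t
      · exact Or.inr ⟨u2, hmem_other u2 hu2.1 hku2.ne', h2'⟩
      -- claw at k with t, u1, u2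
      exfalso
      have hnadj12 : ¬ G.Adj u1 u2 := hole_nbrs_nonadj hcard hconn hdeg hkL hA
      refine hcf ⟨k, t, u1, u2, ?_, ?_, hne12, hut, hku1, hku2, ?_, ?_, hnadj12⟩
      · intro h; exact htL (h ▸ hu1.1)
      · intro h; exact htL (h ▸ hu2.1)
      · intro h; exact h1 h.symm
      · intro h; exact h2' h.symm
    · exact Or.inr ⟨u, hmem_other u huL huk, hut⟩

end Aux

theorem mem_closedNbhd_deformClosure {V : Type u} [Fintype V] [DecidableEq V]
    (G : SimpleGraph V) (hcf : ClawFree G) (C₀ : Finset V) (hC₀ : IsEvenHole G C₀)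
    (t : V) (ht : t ∈ C₀ ∨ ∃ u ∈ C₀, G.Adj u t) :
    ∀ C : Finset V, Relation.ReflTransGen (SingleVertexDeform G) C₀ C → IsEvenHole G C →
      (t ∈ C ∨ ∃ u ∈ C, G.Adj u t) := by
  intro C hrel hC
  clear hC
  suffices h : IsEvenHole G C ∧ (t ∈ C ∨ ∃ u ∈ C, G.Adj u t) from h.2
  induction hrel with
  | refl => exact ⟨hC₀, ht⟩
  | tail _ hstep ih =>
    exact ⟨deform_evenHole ih.1 hstep, deform_closedNbhd hcf ih.1 hstep ih.2⟩
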